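/- Let n, k, t be integers with 1 ≤ t < k ≤ n. Let F be a family of k-element subsets of [n] with maximum degree Δ and diversity γ. If Δ + (k/(k-t))·γ ≤ C(n-1, k-1), then δ_t(F) ≤ C(n-t-1, k-t-1). -/

import Mathlib

/-- Proposition 8: if a family `F` of `k`-subsets of `[n]` with maximum degree `Δ`
and diversity `γ = |F| - Δ` satisfies `Δ + (k/(k-t))·γ ≤ C(n-1, k-1)`, then
`δ_t(F) ≤ C(n-t-1, k-t-1)`. -/
theorem prop_weighted_degree (n k t : ℕ) (ht : 1 ≤ t) (htk : t < k) (hkn : k ≤ n)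
    (F : Finset (Finset (Fin n)))
    (hcard : ∀ A ∈ F, A.card = k)
    (hweight :
      ((Finset.univ.sup (fun i : Fin n => (F.filter (fun A => i ∈ A)).card) : ℕ) : ℝ) +
        (k : ℝ) / ((k : ℝ) - (t : ℝ)) *
          ((F.card - Finset.univ.sup (fun i : Fin n => (F.filter (fun A => i ∈ A)).card) : ℕ) : ℝ)
        ≤ ((n - 1).choose (k - 1) : ℝ)) :
    ∃ T : Finset (Fin n), T.card = t ∧
      (F.filter (fun A => T ⊆ A)).card ≤ (n - t - 1).choose (k - t - 1) := by
  classical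
  set deg : Fin n → ℕ := fun i => (F.filter (fun A => i ∈ A)).card with hdeg
  set Δ : ℕ := Finset.univ.sup deg with hΔ
  have hn : 0 < n := by omega
  obtain ⟨i₀, -, hi₀⟩ := Finset.exists_mem_eq_sup (Finset.univ : Finset (Fin n))
    ⟨⟨0, hn⟩, Finset.mem_univ _⟩ deg
  -- Δ ≤ |F|
  have hΔle : Δ ≤ F.card := by
    rw [hΔ, hi₀]; exact Finset.card_filter_le _ _
  set γ : ℕ := F.card - Δ with hγ
  -- the family of t-subsets avoiding i₀
  set S := Finset.powersetCard t ((Finset.univ : Finset (Fin n)).erase i₀) with hS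
  have hScard : S.card = (n - 1).choose t := by
    rw [hS, Finset.card_powersetCard, Finset.card_erase_of_mem (Finset.mem_univ _),
      Finset.card_univ, Fintype.card_fin]
  have hSne : S.Nonempty := by
    rw [← Finset.card_pos, hScard]
    exact Nat.choose_pos (by omega)
  -- double counting
  have hswap : ∑ T ∈ S, (F.filter (fun A => T ⊆ A)).card
      = ∑ A ∈ F, (S.filter (fun T => T ⊆ A)).card := by
    simp_rw [Finset.card_filter]
    exact Finset.sum_comm
  have hA : ∀ A ∈ F, (S.filter (fun T => T ⊆ A)).card = (A.erase i₀).card.choose t := by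
    intro A hAF
    rw [← Finset.card_powersetCard]
    congr 1
    ext T
    simp only [hS, Finset.mem_filter, Finset.mem_powersetCard, Finset.subset_erase,
      Finset.subset_univ, true_and]
    tauto
  -- compute the sum over F
  have hsumF : ∑ A ∈ F, (A.erase i₀).card.choose t
      = Δ * (k - 1).choose t + γ * k.choose t := by
    rw [← Finset.sum_filter_add_sum_filter_not F (fun A => i₀ ∈ A)]
    have h1 : ∑ A ∈ F.filter (fun A => i₀ ∈ A), (A.erase i₀).card.choose t
        = Δ * (k - 1).choose t := by
      calc ∑ A ∈ F.filter (fun A => i₀ ∈ A), (A.erase i₀).card.choose t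
          = ∑ _A ∈ F.filter (fun A => i₀ ∈ A), (k - 1).choose t :=
            Finset.sum_congr rfl (fun A hAf => by
              rw [Finset.mem_filter] at hAf
              rw [Finset.card_erase_of_mem hAf.2, hcard A hAf.1])
        _ = _ := by rw [Finset.sum_const, smul_eq_mul, hΔ, hi₀]
    have hcardnot : (F.filter (fun A => ¬ i₀ ∈ A)).card = γ := by
      have := Finset.card_filter_add_card_filter_not (s := F)
        (p := fun A => i₀ ∈ A)
      rw [hγ, hΔ, hi₀]
      simp only [hdeg]
      omega
    have h2 : ∑ A ∈ F.filter (fun A => ¬ i₀ ∈ A), (A.erase i₀).card.choose t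
        = γ * k.choose t := by
      calc ∑ A ∈ F.filter (fun A => ¬ i₀ ∈ A), (A.erase i₀).card.choose t
          = ∑ _A ∈ F.filter (fun A => ¬ i₀ ∈ A), k.choose t :=
            Finset.sum_congr rfl (fun A hAf => by
              rw [Finset.mem_filter] at hAf
              rw [Finset.erase_eq_of_notMem hAf.2, hcard A hAf.1])
        _ = _ := by rw [Finset.sum_const, smul_eq_mul, hcardnot]
    rw [h1, h2]
  -- the key numerical inequality, derived from the real hypothesis
  have hid : k * (k - 1).choose t = (k - t) * k.choose t := by
    obtain ⟨m, rfl⟩ : ∃ m, k = t + m + 1 := ⟨k - t - 1, by omega⟩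
    have h1 := Nat.add_one_mul_choose_eq (t + m) m
    have e1 : (t + m).choose m = (t + m).choose t := by
      rw [Nat.add_comm t m]; exact Nat.choose_symm_add
    have e2 : (t + m + 1).choose (m + 1) = (t + m + 1).choose t := by
      have : t + m + 1 = t + (m + 1) := by omega
      rw [this]; rw [Nat.add_comm t (m+1)]; exact Nat.choose_symm_add
    have e3 : t + m + 1 - 1 = t + m := by omega
    have e4 : t + m + 1 - t = m + 1 := by omega
    rw [e1, e2] at h1
    rw [e3, e4, h1, Nat.mul_comm]
  have hnat : Δ * (k - 1).choose t + γ * k.choose t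
      ≤ (n - 1).choose (k - 1) * (k - 1).choose t := by
    have hktR : (0 : ℝ) < (k : ℝ) - (t : ℝ) := by
      have : (t : ℝ) < (k : ℝ) := by exact_mod_cast htk
      linarith
    have hidR : (k : ℝ) * ((k - 1).choose t : ℝ)
        = ((k : ℝ) - (t : ℝ)) * (k.choose t : ℝ) := by
      have := hid
      have h' : ((k * (k - 1).choose t : ℕ) : ℝ) = (((k - t) * k.choose t : ℕ) : ℝ) := by
        exact_mod_cast congrArg (Nat.cast : ℕ → ℝ) this
      push_cast [Nat.cast_sub htk.le] at h'
      linarith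
    have hC : (k : ℝ) / ((k : ℝ) - (t : ℝ)) * ((k - 1).choose t : ℝ) = (k.choose t : ℝ) := by
      field_simp
      linarith [hidR]
    have h := mul_le_mul_of_nonneg_right hweight
      (by positivity : (0 : ℝ) ≤ ((k - 1).choose t : ℝ))
    rw [← Nat.cast_le (α := ℝ)]
    push_cast
    rw [← hC]
    nlinarith [h]
  -- combine
  have hbound : ∑ T ∈ S, (F.filter (fun A => T ⊆ A)).card
      ≤ ∑ _T ∈ S, (n - t - 1).choose (k - t - 1) := by
    rw [Finset.sum_const, smul_eq_mul, hScard, hswap, Finset.sum_congr rfl hA, hsumF]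
    have hmul : (n - 1).choose (k - 1) * (k - 1).choose t
        = (n - 1).choose t * (n - t - 1).choose (k - t - 1) := by
      have := Nat.choose_mul (n := n - 1) (k := k - 1) (s := t) (by omega)
      have e1 : n - 1 - t = n - t - 1 := by omega
      have e2 : k - 1 - t = k - t - 1 := by omega
      rw [e1, e2] at this
      exact this
    rw [← hmul]
    exact hnat
  obtain ⟨T, hTS, hle⟩ := Finset.exists_le_of_sum_le hSne hbound
  refine ⟨T, ?_, hle⟩
  rw [hS, Finset.mem_powersetCard] at hTS
  exact hTS.2
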